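/- Let G = (V,E) be a finite simple undirected graph and let ν̄ᴿ_G denote the optimal value of the linear programming relaxation Pᴿ_G: maximize Σ_{i∈V}(x_i - y_i) over real vectors x, y : V → ℝ subject to x_i + x_j ≤ 1 for each edge ij ∈ E, y_j ≥ x_i and y_i ≥ x_j for each edge ij ∈ E, Σ_{i∈V} x_i ≥ 1, and x_i ≥ 0, y_i ≥ 0 for each i ∈ V. If ν̄ᴿ_G > 0, then ν̄ᴿ_G = ν̄_G; in particular, the maximum of the relaxation is attained at a 0-1 point and there exists a nonempty independent set S with v_G(S) = ν̄ᴿ_G. -/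

import Mathlib

open Finset

variable {V : Type*}

/-- `N(T)`: the set of vertices adjacent to at least one vertex of `T`. -/
def nbhd [Fintype V] [DecidableEq V] (G : SimpleGraph V) [DecidableRel G.Adj]
    (T : Finset V) : Finset V :=
  Finset.univ.filter fun j => ∃ i ∈ T, G.Adj i j

/-- The vulnerability function `v_G(T) = |T| - |N(T)|`. -/
def vuln [Fintype V] [DecidableEq V] (G : SimpleGraph V) [DecidableRel G.Adj]
    (T : Finset V) : ℤ :=
  (T.card : ℤ) - ((nbhd G T).card : ℤ)

/-- `S` is an independent set of `G`. -/
def IsIndepF (G : SimpleGraph V) (S : Finset V) : Prop :=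
  ∀ i ∈ S, ∀ j ∈ S, ¬ G.Adj i j

/-- `(x, y)` is a feasible solution of the linear relaxation `Pᴿ_G`:
`x_i + x_j ≤ 1` for each edge `ij`, `y_j ≥ x_i` and `y_i ≥ x_j` for each edge `ij`,
`Σ_i x_i ≥ 1`, and `x, y ≥ 0`. -/
def LPFeasible [Fintype V] (G : SimpleGraph V) (x y : V → ℝ) : Prop :=
  (∀ i j, G.Adj i j → x i + x j ≤ 1) ∧
  (∀ i j, G.Adj i j → x i ≤ y j) ∧
  (1 ≤ ∑ i, x i) ∧ (∀ i, 0 ≤ x i) ∧ (∀ i, 0 ≤ y i)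

section Aux

variable [Fintype V] [DecidableEq V] (G : SimpleGraph V) [DecidableRel G.Adj]

lemma mem_nbhd {T : Finset V} {j : V} : j ∈ nbhd G T ↔ ∃ i ∈ T, G.Adj i j := by
  simp [nbhd]

/-- Zhang's lemma: if a set has positive vulnerability, there is a nonempty independent
set with at least the same vulnerability, namely `T \ N(T)`. -/
lemma zhang {T : Finset V} (h : 0 < vuln G T) :
    ∃ S : Finset V, S.Nonempty ∧ IsIndepF G S ∧ vuln G T ≤ vuln G S := by
  set N := nbhd G T with hN
  set S := T \ N with hSdef
  have hScard : S.card + (T ∩ N).card = T.card := Finset.card_sdiff_add_card_inter T N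
  have hNcard : (N \ T).card + (N ∩ T).card = N.card := Finset.card_sdiff_add_card_inter N T
  have hcomm : (N ∩ T).card = (T ∩ N).card := by rw [Finset.inter_comm]
  have hpos : (N.card : ℤ) < T.card := by
    have := h; unfold vuln at this; rw [← hN] at this; omega
  have hSnonempty : S.Nonempty := by
    rw [← Finset.card_pos]
    have : T.card ≤ S.card + N.card := Finset.card_le_card_sdiff_add_card
    omega
  have hSindep : IsIndepF G S := by
    intro i hi j hj hadj
    have hiT : i ∉ N := (Finset.mem_sdiff.mp hi).2
    have hjT : j ∈ T := (Finset.mem_sdiff.mp hj).1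
    exact hiT ((mem_nbhd G).mpr ⟨j, hjT, hadj.symm⟩)
  have hsub : nbhd G S ⊆ N \ T := by
    intro j hj
    obtain ⟨i, hiS, hij⟩ := (mem_nbhd G).mp hj
    have hiT : i ∈ T := (Finset.mem_sdiff.mp hiS).1
    have hiN : i ∉ N := (Finset.mem_sdiff.mp hiS).2
    refine Finset.mem_sdiff.mpr ⟨(mem_nbhd G).mpr ⟨i, hiT, hij⟩, fun hjT => ?_⟩
    exact hiN ((mem_nbhd G).mpr ⟨j, hjT, hij.symm⟩)
  have hcard2 : (nbhd G S).card ≤ (N \ T).card := Finset.card_le_card hsub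
  refine ⟨S, hSnonempty, hSindep, ?_⟩
  unfold vuln
  rw [← hN]
  have h1 : (S.card : ℤ) + (T ∩ N).card = T.card := by exact_mod_cast hScard
  have h2 : ((N \ T).card : ℤ) + (N ∩ T).card = N.card := by exact_mod_cast hNcard
  have h3 : ((N ∩ T).card : ℤ) = (T ∩ N).card := by exact_mod_cast hcomm
  have h4 : ((nbhd G S).card : ℤ) ≤ (N \ T).card := by exact_mod_cast hcard2
  omega

/-- The 0-1 point associated to an independent set is LP feasible with objective `vuln`. -/
lemma indep_point (S : Finset V) (hne : S.Nonempty) (hind : IsIndepF G S) :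
    LPFeasible G (fun i => if i ∈ S then (1:ℝ) else 0)
      (fun i => if i ∈ nbhd G S then (1:ℝ) else 0) ∧
    ∑ i, ((if i ∈ S then (1:ℝ) else 0) - (if i ∈ nbhd G S then (1:ℝ) else 0))
      = (vuln G S : ℝ) := by
  constructor
  · refine ⟨?_, ?_, ?_, ?_, ?_⟩
    · intro i j hij
      by_cases hi : i ∈ S <;> by_cases hj : j ∈ S <;> simp [hi, hj]
      exact absurd hij (hind i hi j hj)
    · intro i j hij
      by_cases hi : i ∈ S
      · have : j ∈ nbhd G S := (mem_nbhd G).mpr ⟨i, hi, hij⟩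
        simp [hi, this]
      · simp [hi]; split <;> norm_num
    · have : (∑ i, if i ∈ S then (1:ℝ) else 0) = S.card := by
        rw [Finset.sum_boole]
        congr 1
        simp [Finset.filter_mem_eq_inter]
      rw [this]
      exact_mod_cast Nat.one_le_iff_ne_zero.mpr (by simpa [Finset.card_eq_zero] using hne.ne_empty)
    · intro i; dsimp only; split <;> norm_num
    · intro i; dsimp only; split <;> norm_num
  · rw [Finset.sum_sub_distrib, Finset.sum_boole, Finset.sum_boole]
    have e1 : Finset.univ.filter (fun i => i ∈ S) = S := by
      simp [Finset.filter_mem_eq_inter]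
    have e2 : Finset.univ.filter (fun i => i ∈ nbhd G S) = nbhd G S := by
      simp [Finset.filter_mem_eq_inter]
    rw [e1, e2]
    unfold vuln
    push_cast
    ring

end Aux

/-- Let `ν̄ᴿ_G` be the optimal value of the linear programming relaxation `Pᴿ_G`
(maximizing `Σ_i (x_i - y_i)` over feasible `(x, y)`). If `ν̄ᴿ_G > 0`, then
`ν̄ᴿ_G = ν̄_G`; in particular, the maximum of the relaxation is attained at a 0-1 point and
there exists a nonempty independent set `S` with `v_G(S) = ν̄ᴿ_G`. -/
theorem lpRelaxation_optimal_eq_vulnerability_of_pos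
    [Fintype V] [DecidableEq V] (G : SimpleGraph V) [DecidableRel G.Adj]
    (nuR : ℝ) (nuBar : ℤ)
    (hR : IsGreatest {r : ℝ | ∃ x y : V → ℝ, LPFeasible G x y ∧ ∑ i, (x i - y i) = r} nuR)
    (hBar : IsGreatest {z : ℤ | ∃ S : Finset V, S.Nonempty ∧ IsIndepF G S ∧ vuln G S = z} nuBar)
    (hpos : 0 < nuR) :
    nuR = (nuBar : ℝ) ∧
      (∃ x y : V → ℝ, LPFeasible G x y ∧
        (∀ i, (x i = 0 ∨ x i = 1) ∧ (y i = 0 ∨ y i = 1)) ∧ ∑ i, (x i - y i) = nuR) ∧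
      (∃ S : Finset V, S.Nonempty ∧ IsIndepF G S ∧ (vuln G S : ℝ) = nuR) := by
  classical
  -- easy direction: nuBar ≤ nuR
  obtain ⟨S₀, hS₀ne, hS₀ind, hS₀v⟩ := hBar.1
  obtain ⟨hfeas₀, hobj₀⟩ := indep_point G S₀ hS₀ne hS₀ind
  have hle1 : (nuBar : ℝ) ≤ nuR := hR.2 ⟨_, _, hfeas₀, by rw [hobj₀, hS₀v]⟩
  -- hard direction: nuR ≤ nuBar
  have hle2 : nuR ≤ (nuBar : ℝ) := by
    obtain ⟨x, y, hf, hobj⟩ := hR.1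
    obtain ⟨he, hxy, hsum, hx0, hy0⟩ := hf
    -- no isolated vertices
    have hdeg : ∀ v : V, ∃ j, G.Adj v j := by
      intro v
      by_contra hv
      push_neg at hv
      set x' : V → ℝ := fun i => x i + if i = v then 1 else 0 with hx'
      have hmem : (∑ i, (x' i - y i)) ∈
          {r : ℝ | ∃ x y : V → ℝ, LPFeasible G x y ∧ ∑ i, (x i - y i) = r} := by
        refine ⟨x', y, ⟨?_, ?_, ?_, ?_, hy0⟩, rfl⟩
        · intro i j hij
          have hi : i ≠ v := fun h => hv j (h ▸ hij)
          have hj : j ≠ v := fun h => hv i (h ▸ hij.symm)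
          simpa [hx', hi, hj] using he i j hij
        · intro i j hij
          have hi : i ≠ v := fun h => hv j (h ▸ hij)
          simpa [hx', hi] using hxy i j hij
        · calc (1:ℝ) ≤ ∑ i, x i := hsum
          _ ≤ ∑ i, x' i := by
              apply Finset.sum_le_sum
              intro i _
              simp only [hx']
              split <;> linarith
        · intro i; simp only [hx']; have := hx0 i; split <;> linarith
      have hbig : ∑ i, (x' i - y i) = nuR + 1 := by
        have : ∑ i, (x' i - y i) = ∑ i, (x i - y i) + ∑ i, (if i = v then (1:ℝ) else 0) := by
          rw [← Finset.sum_add_distrib]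
          apply Finset.sum_congr rfl
          intro i _
          simp only [hx']
          ring
        rw [this, hobj, Finset.sum_ite_eq' Finset.univ v (fun _ => (1:ℝ))]
        simp
      have := hR.2 hmem
      rw [hbig] at this
      linarith
    have hx1 : ∀ i, x i ≤ 1 := by
      intro i
      obtain ⟨j, hj⟩ := hdeg i
      have := he i j hj
      have := hx0 j
      linarith
    -- clip y
    set y' : V → ℝ := fun i => min (y i) 1 with hy'
    have hy'0 : ∀ i, 0 ≤ y' i := fun i => le_min (hy0 i) zero_le_one
    have hy'1 : ∀ i, y' i ≤ 1 := fun i => min_le_right _ _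
    have hxy' : ∀ i j, G.Adj i j → x i ≤ y' j := fun i j h => le_min (hxy i j h) (hx1 i)
    have hobj' : ∑ i, (x i - y' i) = nuR := by
      have hge : nuR ≤ ∑ i, (x i - y' i) := by
        rw [← hobj]
        apply Finset.sum_le_sum
        intro i _
        have : y' i ≤ y i := min_le_left _ _
        linarith
      have hle : ∑ i, (x i - y' i) ≤ nuR :=
        hR.2 ⟨x, y', ⟨he, hxy', hsum, hx0, hy'0⟩, rfl⟩
      linarith
    -- the step function
    set F : ℝ → ℝ := fun θ => ∑ i, ((Set.Iio (x i)).indicator (fun _ => (1:ℝ)) θ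
        - (Set.Iio (y' i)).indicator (fun _ => (1:ℝ)) θ) with hF
    have hInd : ∀ a : ℝ, MeasureTheory.IntegrableOn
        ((Set.Iio a).indicator (fun _ => (1:ℝ))) (Set.Ioo 0 1) := by
      intro a
      apply MeasureTheory.Integrable.indicator _ measurableSet_Iio
      exact MeasureTheory.integrableOn_const (by simp [Real.volume_Ioo])
    have hIndInt : ∀ a : ℝ, 0 ≤ a → a ≤ 1 →
        ∫ θ in Set.Ioo (0:ℝ) 1, (Set.Iio a).indicator (fun _ => (1:ℝ)) θ = a := by
      intro a h0 h1
      rw [MeasureTheory.setIntegral_indicator measurableSet_Iio]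
      have : Set.Ioo (0:ℝ) 1 ∩ Set.Iio a = Set.Ioo 0 a := by
        ext t
        simp only [Set.mem_inter_iff, Set.mem_Ioo, Set.mem_Iio]
        exact ⟨fun ⟨⟨a1, _⟩, a3⟩ => ⟨a1, a3⟩, fun ⟨a1, a2⟩ => ⟨⟨a1, lt_of_lt_of_le a2 h1⟩, a2⟩⟩
      rw [this, MeasureTheory.setIntegral_const]
      simp [Real.volume_Ioo, h0]
    have hFint : MeasureTheory.IntegrableOn F (Set.Ioo (0:ℝ) 1) := by
      apply MeasureTheory.integrable_finset_sum
      intro i _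
      exact (hInd (x i)).sub (hInd (y' i))
    have hFval : ∫ θ in Set.Ioo (0:ℝ) 1, F θ = nuR := by
      simp only [hF]
      rw [MeasureTheory.integral_finset_sum
        (f := fun (i : V) (θ : ℝ) => (Set.Iio (x i)).indicator (fun _ => (1:ℝ)) θ
          - (Set.Iio (y' i)).indicator (fun _ => (1:ℝ)) θ)
        _ (fun i _ => (hInd (x i)).sub (hInd (y' i)))]
      rw [← hobj']
      apply Finset.sum_congr rfl
      intro i _
      rw [MeasureTheory.integral_sub (hInd (x i)) (hInd (y' i)),
        hIndInt (x i) (hx0 i) (hx1 i), hIndInt (y' i) (hy'0 i) (hy'1 i)]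
    -- pointwise bound
    have hFbound : ∀ θ ∈ Set.Ioo (0:ℝ) 1, F θ ≤ max 0 (nuBar : ℝ) := by
      intro θ hθ
      set A : Finset V := Finset.univ.filter (fun i => θ < x i) with hA
      set B : Finset V := Finset.univ.filter (fun i => θ < y' i) with hB
      have hFθ : F θ = (A.card : ℝ) - B.card := by
        simp only [hF]
        rw [Finset.sum_sub_distrib]
        congr 1
        · simp only [Set.indicator_apply, Set.mem_Iio]
          rw [Finset.sum_boole, hA]
        · simp only [Set.indicator_apply, Set.mem_Iio]
          rw [Finset.sum_boole, hB]
      rcases le_or_gt (A.card : ℤ) (B.card : ℤ) with hc | hc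
      · rw [hFθ]
        have : (A.card : ℝ) ≤ B.card := by exact_mod_cast hc
        have := le_max_left (0:ℝ) (nuBar : ℝ)
        linarith
      · -- A is a set with positive vulnerability
        have hNsub : nbhd G A ⊆ B := by
          intro j hj
          obtain ⟨i, hiA, hij⟩ := (mem_nbhd G).mp hj
          have hxi : θ < x i := (Finset.mem_filter.mp hiA).2
          have : x i ≤ y' j := hxy' i j hij
          exact Finset.mem_filter.mpr ⟨Finset.mem_univ j, lt_of_lt_of_le hxi this⟩
        have hNB : ((nbhd G A).card : ℤ) ≤ B.card := by
          exact_mod_cast Finset.card_le_card hNsub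
        have hvA : 0 < vuln G A := by unfold vuln; omega
        obtain ⟨S, hSne, hSind, hSv⟩ := zhang G hvA
        have hSle : vuln G S ≤ nuBar := hBar.2 ⟨S, hSne, hSind, rfl⟩
        have : (A.card : ℤ) - B.card ≤ nuBar := by
          have : vuln G A = (A.card : ℤ) - (nbhd G A).card := rfl
          omega
        rw [hFθ]
        have h' : (A.card : ℝ) - B.card ≤ (nuBar : ℝ) := by exact_mod_cast this
        exact le_trans h' (le_max_right _ _)
    -- integrate the bound
    have hle' : nuR ≤ max 0 (nuBar : ℝ) := by
      rw [← hFval]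
      have hconst : MeasureTheory.IntegrableOn (fun _ : ℝ => max 0 (nuBar : ℝ))
          (Set.Ioo (0:ℝ) 1) :=
        MeasureTheory.integrableOn_const (by simp [Real.volume_Ioo])
      calc ∫ θ in Set.Ioo (0:ℝ) 1, F θ
          ≤ ∫ _ in Set.Ioo (0:ℝ) 1, max 0 (nuBar : ℝ) :=
            MeasureTheory.setIntegral_mono_on hFint hconst measurableSet_Ioo hFbound
        _ = max 0 (nuBar : ℝ) := by
            rw [MeasureTheory.setIntegral_const]
            simp [Real.volume_Ioo]
    rcases le_or_gt ((nuBar : ℝ)) 0 with h | h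
    · rw [max_eq_left h] at hle'; linarith
    · rwa [max_eq_right h.le] at hle'
  have heq : nuR = (nuBar : ℝ) := le_antisymm hle2 hle1
  refine ⟨heq, ⟨_, _, hfeas₀, fun i => ⟨?_, ?_⟩, by rw [hobj₀, hS₀v, heq]⟩,
    ⟨S₀, hS₀ne, hS₀ind, by rw [hS₀v, heq]⟩⟩
  · by_cases h : i ∈ S₀ <;> simp [h]
  · by_cases h : i ∈ nbhd G S₀ <;> simp [h]
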